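/- arXiv:math/0612241 — 5 statements merged into one kernel-verified Lean document; each statement's English description precedes it below -/
import Mathlib

section
/- For every countable limit ordinal δ < ω₁ of cofinality ω such that ω² divides δ, there exists a special ladder on δ. -/
set_option autoImplicit false
noncomputable section

open Ordinal Cardinal

/-- A ladder on a limit ordinal `δ`: a strictly increasing cofinal sequence of
successor ordinals below `δ`. -/
structure IsLadder (δ : Ordinal) (η : ℕ → Ordinal) : Prop where
  strictMono : StrictMono η
  isSucc : ∀ n : ℕ, ∃ α : Ordinal, η n = α + 1
  lt_delta : ∀ n : ℕ, η n < δ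
  cofinal : ∀ β < δ, ∃ n : ℕ, β < η n

/-- Conditions (a) and (b) for `k` to witness that the ladder `η` is special. -/
def SpecialCond (η : ℕ → Ordinal) (k : ℕ → ℕ) : Prop :=
  ∀ n : ℕ,
    (∀ i < k (n + 1) - k n, ∀ j < k (n + 1) - k n,
      η (k n + i) + Ordinal.omega0 = η (k n + j) + Ordinal.omega0) ∧
    η (k n) + Ordinal.omega0 < η (k (n + 1))

/-- A club (closed unbounded) subset of `ω₁`. -/
def IsClubBelowOmega1 (C : Set Ordinal) : Prop :=
  (∀ γ ∈ C, γ < ω₁) ∧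
  (∀ α < ω₁, ∃ γ ∈ C, α < γ) ∧
  (∀ δ, δ < ω₁ → δ ≠ 0 → (∀ β < δ, ∃ γ ∈ C, β < γ ∧ γ < δ) → δ ∈ C)

/-- A stationary subset of `ω₁`: one meeting every club. -/
def IsStationaryBelowOmega1 (T : Set Ordinal) : Prop :=
  ∀ C : Set Ordinal, IsClubBelowOmega1 C → (T ∩ C).Nonempty

/-- The standing hypotheses on the set `S`: a stationary, co-stationary subset of `ω₁`
consisting of limit ordinals of cofinality `ω` divisible by `ω²`. -/
structure GoodS (S : Set Ordinal) : Prop where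
  stationary : IsStationaryBelowOmega1 S
  costationary : IsStationaryBelowOmega1 ({α : Ordinal | α < ω₁} \ S)
  lt_omega1 : ∀ δ ∈ S, δ < ω₁
  isLimit : ∀ δ ∈ S, Order.IsSuccLimit δ
  cof_eq : ∀ δ ∈ S, Ordinal.cof δ = Cardinal.aleph0
  omega_sq_dvd : ∀ δ ∈ S, Ordinal.omega0 ^ 2 ∣ δ

/-- A special ladder system on `S`: for each `δ ∈ S` a special ladder `eta δ`
with witnessing sequence `kk δ`. -/
structure LadderSystem (S : Set Ordinal) where
  eta : Ordinal → ℕ → Ordinal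
  kk : Ordinal → ℕ → ℕ
  ladder : ∀ δ ∈ S, IsLadder δ (eta δ)
  kk_pos : ∀ δ ∈ S, 0 < kk δ 0
  kk_mono : ∀ δ ∈ S, StrictMono (kk δ)
  special : ∀ δ ∈ S, SpecialCond (eta δ) (kk δ)

/-- Equality of the ω-ranges of two special ladder systems: `rd(η̄) = rd(ν̄)`. -/
def rdEq (S : Set Ordinal) (L M : LadderSystem S) : Prop :=
  ∀ δ ∈ S, ∀ n : ℕ,
    L.eta δ (L.kk δ n) + Ordinal.omega0 = M.eta δ (M.kk δ n) + Ordinal.omega0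

/-- Index type for the basis of the ambient `ℚ`-vector space `F`. -/
abbrev FIdx : Type 1 := Ordinal ⊕ (Ordinal × ℕ)

/-- The ambient `ℚ`-vector space `F`, with basis `x_β` (β an ordinal) and `y_{δ,n}`. -/
abbrev Fsp : Type 1 := FIdx →₀ ℚ

/-- The basis vector `x_β`. -/
def xgen (β : Ordinal) : Fsp := Finsupp.single (Sum.inl β) 1

/-- The basis vector `y_{δ,n}`. -/
def ygen (δ : Ordinal) (n : ℕ) : Fsp := Finsupp.single (Sum.inr (δ, n)) 1

/-- The elements `z_{δ,n}`, defined by `z_{δ,0} = y_δ` and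
`z_{δ,n+1} = ψ(n)⁻¹ (z_{δ,n} + Σ_{l<tₙ^δ} a_l^{δ,n} x_{η_δ(kₙ^δ+l)})`, equivalently
`ψ(n) z_{δ,n+1} = z_{δ,n} + Σ_{l<tₙ^δ} a_l^{δ,n} x_{η_δ(kₙ^δ+l)}`. -/
def zgen (eta : Ordinal → ℕ → Ordinal) (kk : Ordinal → ℕ → ℕ)
    (a : Ordinal → ℕ → ℕ → ℤ) (ψ : ℕ → ℕ) (δ : Ordinal) : ℕ → Fsp
  | 0 => ygen δ 0
  | n + 1 => ((ψ n : ℚ))⁻¹ •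
      (zgen eta kk a ψ δ n +
        ∑ l ∈ Finset.range (kk δ (n + 1) - kk δ n), a δ n l • xgen (eta δ (kk δ n + l)))

/-- All the data needed to build the group `G_η̄`: a special ladder system together with
the function `ψ` (everywhere nonzero) and the coefficients `a_l^{δ,n}` with
`gcd(a_l^{δ,n} : l < tₙ^δ) = 1`. -/
structure GroupData (S : Set Ordinal) extends LadderSystem S where
  a : Ordinal → ℕ → ℕ → ℤ
  psi : ℕ → ℕ
  psi_ne : ∀ n : ℕ, psi n ≠ 0
  a_gcd : ∀ δ ∈ S, ∀ n : ℕ, (Finset.range (kk δ (n + 1) - kk δ n)).gcd (a δ n) = 1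

/-- The group `G_η̄ ≤ (F,+)`, generated by the `x_β` (β < ω₁) and the `z_{δ,n}` (δ ∈ S). -/
def Ggrp (S : Set Ordinal) (D : GroupData S) : AddSubgroup Fsp :=
  AddSubgroup.closure
    ({f : Fsp | ∃ β < ω₁, f = xgen β} ∪
     {f : Fsp | ∃ δ ∈ S, ∃ n : ℕ, f = zgen D.eta D.kk D.a D.psi δ n})

/-- The `ℚ`-subspace `V_α` spanned by the `x_β` (β < α+ω) and `y_{δ,n}` (δ ∈ S ∩ α). -/
def Vsp (S : Set Ordinal) (α : Ordinal) : Submodule ℚ Fsp :=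
  Submodule.span ℚ
    ({f : Fsp | ∃ β < α + Ordinal.omega0, f = xgen β} ∪
     {f : Fsp | ∃ δ ∈ S, δ < α ∧ ∃ n : ℕ, f = ygen δ n})

/-- The pure closure of `H` in `G`: `{g ∈ G : m • g ∈ H for some nonzero integer m}`. -/
def purify (G H : AddSubgroup Fsp) : AddSubgroup Fsp where
  carrier := {g : Fsp | g ∈ G ∧ ∃ m : ℤ, m ≠ 0 ∧ m • g ∈ H}
  zero_mem' := ⟨G.zero_mem, 1, one_ne_zero, by simpa using H.zero_mem⟩
  add_mem' := by
    rintro g₁ g₂ ⟨hg₁, m₁, hm₁, h₁⟩ ⟨hg₂, m₂, hm₂, h₂⟩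
    refine ⟨G.add_mem hg₁ hg₂, m₁ * m₂, mul_ne_zero hm₁ hm₂, ?_⟩
    rw [smul_add]
    exact H.add_mem (by rw [mul_comm, mul_smul]; exact H.zsmul_mem h₁ _)
      (by rw [mul_smul]; exact H.zsmul_mem h₂ _)
  neg_mem' := by
    rintro g ⟨hg, m, hm, h⟩
    exact ⟨G.neg_mem hg, m, hm, by simpa using H.neg_mem h⟩

/-- The canonical filtration `G_η̄^α`: the pure closure in `G_η̄` of `G_η̄ ∩ V_α`. -/
def Gfil (S : Set Ordinal) (D : GroupData S) (α : Ordinal) : AddSubgroup Fsp :=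
  purify (Ggrp S D) ((Vsp S α).toAddSubgroup ⊓ Ggrp S D)

/-- `H` is a direct summand of `G` (both viewed as subgroups of the ambient group). -/
def IsDirectSummandIn (H G : AddSubgroup Fsp) : Prop :=
  H ≤ G ∧ ∃ K : AddSubgroup Fsp, K ≤ G ∧ H ⊓ K = ⊥ ∧ H ⊔ K = G



private lemma add_omega0_lt_of_dvd {δ β : Ordinal} (h4 : Ordinal.omega0 ^ 2 ∣ δ)
    (hβ : β < δ) : β + Ordinal.omega0 < δ := by
  rw [← Ordinal.opow_natCast] at h4
  set c : Ordinal := ((2 : ℕ) : Ordinal) with hc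
  obtain ⟨γ, rfl⟩ := h4
  have hω2 : (Ordinal.omega0 ^ c : Ordinal) ≠ 0 :=
    Ordinal.opow_ne_zero _ Ordinal.omega0_ne_zero
  have hq : β / Ordinal.omega0 ^ c < γ := by
    rwa [Ordinal.div_lt hω2]
  have hmod : Ordinal.omega0 ^ c * (β / Ordinal.omega0 ^ c) + β % Ordinal.omega0 ^ c = β :=
    Ordinal.div_add_mod _ _
  have hr : β % Ordinal.omega0 ^ c < Ordinal.omega0 ^ c := Ordinal.mod_lt _ hω2
  have key : β + Ordinal.omega0 ^ c ≤ Ordinal.omega0 ^ c * γ := by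
    calc β + Ordinal.omega0 ^ c
        = Ordinal.omega0 ^ c * (β / Ordinal.omega0 ^ c) +
            (β % Ordinal.omega0 ^ c + Ordinal.omega0 ^ c) := by rw [← add_assoc, hmod]
      _ = Ordinal.omega0 ^ c * (β / Ordinal.omega0 ^ c) + Ordinal.omega0 ^ c := by
          rw [Ordinal.add_omega0_opow hr]
      _ = Ordinal.omega0 ^ c * (β / Ordinal.omega0 ^ c + 1) := by rw [mul_add_one]
      _ ≤ Ordinal.omega0 ^ c * γ := by
          refine mul_le_mul_right ?_ _
          rw [Ordinal.add_one_eq_succ, Order.succ_le_iff]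
          exact hq
  have hlt : β + Ordinal.omega0 < β + Ordinal.omega0 ^ c := by
    refine add_lt_add_right ?_ β
    have h1c : (1 : Ordinal) < c := by
      rw [hc]; exact_mod_cast Nat.one_lt_cast.2 one_lt_two
    have := (Ordinal.opow_lt_opow_iff_right Ordinal.one_lt_omega0).2 h1c
    simpa using this
  exact hlt.trans_le key

private noncomputable def specialSeq (e : ℕ → Ordinal) : ℕ → Ordinal
  | 0 => 1
  | n + 1 => (max (e n) (specialSeq e n) + Ordinal.omega0) + 1

theorem statement0 (δ : Ordinal) (h1 : δ < ω₁) (h2 : Order.IsSuccLimit δ)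
    (h3 : Ordinal.cof δ = Cardinal.aleph0) (h4 : Ordinal.omega0 ^ 2 ∣ δ) :
    ∃ η : ℕ → Ordinal, ∃ k : ℕ → ℕ,
      IsLadder δ η ∧ 0 < k 0 ∧ StrictMono k ∧ SpecialCond η k := by
  -- enumerate the ordinals below δ
  have hδ0 : δ ≠ 0 := (Ordinal.isSuccLimit_iff.1 h2).1
  have hne : (Set.Iio δ).Nonempty := ⟨0, pos_iff_ne_zero.2 hδ0⟩
  have hcount : (Set.Iio δ).Countable := by
    rw [Cardinal.countable_iff_lt_aleph_one, Ordinal.mk_Iio_ordinal,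
      Cardinal.lift_lt_aleph_one, ← Cardinal.lt_ord, Cardinal.ord_aleph]
    exact h1
  obtain ⟨e0, he0⟩ := hcount.exists_surjective hne
  set e : ℕ → Ordinal := fun n => (e0 n : Ordinal) with he
  have helt : ∀ n, e n < δ := fun n => (e0 n).2
  have hesurj : ∀ β < δ, ∃ n, e n = β := by
    intro β hβ
    obtain ⟨n, hn⟩ := he0 ⟨β, hβ⟩
    exact ⟨n, by simp [he, hn]⟩
  set η : ℕ → Ordinal := specialSeq e with hη
  -- basic facts about η
  have hlt : ∀ n, η n < δ := by
    intro n
    induction n with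
    | zero =>
      simpa [hη, specialSeq] using Ordinal.one_lt_of_isSuccLimit h2
    | succ n ih =>
      have hmax : max (e n) (η n) < δ := max_lt (helt n) ih
      have h1 : max (e n) (η n) + Ordinal.omega0 < δ := add_omega0_lt_of_dvd h4 hmax
      exact (show η (n+1) = _ from rfl) ▸ h2.succ_lt h1
  have hstep : ∀ n, η n < η (n + 1) := by
    intro n
    have : η n ≤ max (e n) (η n) := le_max_right _ _
    calc η n ≤ max (e n) (η n) := this
      _ < max (e n) (η n) + Ordinal.omega0 := by
          simpa using add_lt_add_right Ordinal.omega0_pos (max (e n) (η n))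
      _ < η (n + 1) := lt_add_one _
  have hmono : StrictMono η := strictMono_nat_of_lt_succ hstep
  have hcof : ∀ β < δ, ∃ n, β < η n := by
    intro β hβ
    obtain ⟨n, hn⟩ := hesurj β hβ
    refine ⟨n + 1, ?_⟩
    calc β = e n := hn.symm
      _ ≤ max (e n) (η n) := le_max_left _ _
      _ < η (n + 1) := by
          refine lt_of_lt_of_le ?_ (le_of_lt (lt_add_one _))
          simpa only [add_zero] using add_lt_add_right Ordinal.omega0_pos (max (e n) (η n))
  have hsucc : ∀ n, ∃ α, η n = α + 1 := by
    intro n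
    cases n with
    | zero => exact ⟨0, by simp [hη, specialSeq]⟩
    | succ n => exact ⟨max (e n) (η n) + Ordinal.omega0, rfl⟩
  refine ⟨η, fun n => n + 1, ⟨hmono, hsucc, hlt, hcof⟩, Nat.succ_pos 0,
    fun a b h => by simpa using h, ?_⟩
  intro n
  constructor
  · intro i hi j hj
    simp only [] at hi hj
    have hi0 : i = 0 := by omega
    have hj0 : j = 0 := by omega
    subst hi0; subst hj0; rfl
  · show η (n + 1) + Ordinal.omega0 < η (n + 2)
    calc η (n + 1) + Ordinal.omega0
        ≤ max (e (n+1)) (η (n+1)) + Ordinal.omega0 :=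
          add_le_add_left (le_max_right _ _) _
      _ < η (n + 2) := lt_add_one _


end
end

section
/- For every ν < ω₁ with ν ∉ S there exists a group homomorphism π_ν : G_η̄ → G_η̄^ν such that π_ν(g) = g for every g ∈ G_η̄^ν; consequently G_η̄^ν is a direct summand of G_η̄. -/
set_option autoImplicit false
noncomputable section

open Ordinal Cardinal

namespace Stmt6

attribute [local instance] Classical.propDecidable

variable (S : Set Ordinal) (D : GroupData S) (ν : Ordinal)

/-- The block sum `w_{δ,i} = Σ_{l<tᵢ} a_l x_{η(kᵢ+l)}`. -/
def wvec (δ : Ordinal) (i : ℕ) : Fsp :=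
  ∑ l ∈ Finset.range (D.kk δ (i + 1) - D.kk δ i), D.a δ i l • xgen (D.eta δ (D.kk δ i + l))

/-- `Pψ n = ∏_{i<n} ψ(i)`. -/
def Pψ (n : ℕ) : ℕ := ∏ i ∈ Finset.range n, D.psi i

lemma Pψ_ne0 (n : ℕ) : Pψ S D n ≠ 0 :=
  Finset.prod_ne_zero_iff.2 fun i _ => D.psi_ne i

lemma Pψ_ne (n : ℕ) : (Pψ S D n : ℚ) ≠ 0 := by exact_mod_cast Pψ_ne0 S D n

lemma Lz (δ : Ordinal) : ∀ n : ℕ, (Pψ S D n : ℚ) • zgen D.eta D.kk D.a D.psi δ n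
    = ygen δ 0 + ∑ i ∈ Finset.range n, (Pψ S D i : ℚ) • wvec S D δ i
  | 0 => by simp [Pψ, zgen]
  | n + 1 => by
    have hψ : (D.psi n : ℚ) ≠ 0 := Nat.cast_ne_zero.2 (D.psi_ne n)
    have h1 : (Pψ S D (n+1) : ℚ) = (Pψ S D n : ℚ) * (D.psi n : ℚ) := by
      simp [Pψ, Finset.prod_range_succ]
    rw [zgen, h1, smul_smul, mul_assoc, mul_inv_cancel₀ hψ, mul_one, smul_add,
      Lz δ n, Finset.sum_range_succ]
    rw [show (∑ l ∈ Finset.range (D.kk δ (n + 1) - D.kk δ n),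
        D.a δ n l • xgen (D.eta δ (D.kk δ n + l))) = wvec S D δ n from rfl]
    abel

/-- The cutoff `N_δ`: least `n` with `η_δ(k_n) ≥ ν + ω`. -/
def Nd (δ : Ordinal) : ℕ :=
  if h : ∃ n, ¬ (D.eta δ (D.kk δ n) < ν + Ordinal.omega0) then Nat.find h else 0

/-- `P(y_δ)` for `δ ∈ S`, `δ > ν`: the "low part" of `y_δ`. -/
def ylow (δ : Ordinal) : Fsp :=
  ygen δ 0 - (Pψ S D (Nd S D ν δ) : ℚ) • zgen D.eta D.kk D.a D.psi δ (Nd S D ν δ)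

lemma ylow_eq (δ : Ordinal) :
    ylow S D ν δ = - ∑ i ∈ Finset.range (Nd S D ν δ), (Pψ S D i : ℚ) • wvec S D δ i := by
  rw [ylow, Lz]; abel

/-- Values of the projection on the basis. -/
def pb : FIdx → Fsp
  | Sum.inl β => if β < ν + Ordinal.omega0 then xgen β else 0
  | Sum.inr (δ, n) =>
      if δ < ν then ygen δ n
      else if n = 0 ∧ δ ∈ S ∧ ν < δ then ylow S D ν δ else 0

/-- The `ℚ`-linear projection of `F`. -/
def Pmap : Fsp →ₗ[ℚ] Fsp :=
  Finsupp.lsum ℚ fun i => LinearMap.toSpanSingleton ℚ Fsp (pb S D ν i)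

lemma Pmap_single (i : FIdx) (c : ℚ) :
    Stmt6.Pmap S D ν (Finsupp.single i c) = c • pb S D ν i := by
  rw [Pmap, Finsupp.lsum_single, LinearMap.toSpanSingleton_apply]

lemma Pmap_xgen (β : Ordinal) :
    Stmt6.Pmap S D ν (xgen β) = if β < ν + Ordinal.omega0 then xgen β else 0 := by
  rw [xgen, Pmap_single, one_smul]; rfl

lemma Pmap_ygen (δ : Ordinal) (n : ℕ) :
    Stmt6.Pmap S D ν (ygen δ n) =
      (if δ < ν then ygen δ n
        else if n = 0 ∧ δ ∈ S ∧ ν < δ then ylow S D ν δ else 0) := by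
  rw [ygen, Pmap_single, one_smul]; rfl

lemma lt_nu_omega_iff (β : Ordinal) :
    β < ν + Ordinal.omega0 ↔ β + Ordinal.omega0 ≤ ν + Ordinal.omega0 := by
  constructor
  · intro h
    obtain ⟨d, hd, hle⟩ := (Ordinal.lt_add_iff omega0_ne_zero).1 h
    calc β + Ordinal.omega0 ≤ ν + d + Ordinal.omega0 := add_le_add_left hle _
      _ = ν + (d + Ordinal.omega0) := by rw [add_assoc]
      _ = ν + Ordinal.omega0 := by rw [Ordinal.add_omega0 hd]
  · intro h
    exact lt_of_lt_of_le (lt_add_of_pos_right β omega0_pos) h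

section delta
variable {S D ν}

lemma nuomega_lt_delta (hS : GoodS S) {δ : Ordinal} (hδ : δ ∈ S) (hνδ : ν < δ) : ν + Ordinal.omega0 < δ := by
  obtain ⟨γ, hγ⟩ := hS.omega_sq_dvd δ hδ
  rw [sq] at hγ
  have hωω : ω * ω ≠ 0 := _root_.mul_ne_zero omega0_ne_zero omega0_ne_zero
  set q := ν / (ω * ω) with hq
  set r := ν % (ω * ω) with hr
  have hqr : ω * ω * q + r = ν := Ordinal.div_add_mod ν (ω * ω)
  have hrlt : r < ω * ω := Ordinal.mod_lt ν hωω
  have hqγ : q < γ := (Ordinal.div_lt hωω).2 (hγ ▸ hνδ)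
  have he : r / ω < ω := (Ordinal.div_lt omega0_ne_zero).2 hrlt
  obtain ⟨m, hm⟩ := Ordinal.lt_omega0.1 he
  have hms : ∀ y x : Ordinal, y * (x + 1) = y * x + y := fun y x => by
    rw [Ordinal.add_one_eq_succ, Ordinal.mul_succ]
  have hr2 : r < ω * (r / ω) + ω :=
    calc r = ω * (r / ω) + r % ω := (Ordinal.div_add_mod r ω).symm
      _ < ω * (r / ω) + ω := add_lt_add_right (Ordinal.mod_lt r omega0_ne_zero) _
  have hlt2 : r / ω + 1 + 1 < ω := by
    rw [hm]
    exact_mod_cast Ordinal.nat_lt_omega0 (m + 1 + 1)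
  have hro : r + ω < ω * ω := by
    have h1 : r + ω ≤ ω * (r / ω) + ω + ω := add_le_add_left hr2.le ω
    have h2 : ω * (r / ω + 1 + 1) = ω * (r / ω) + ω + ω := by rw [hms, hms]
    rw [← h2] at h1
    exact lt_of_le_of_lt h1 (mul_lt_mul_of_pos_left hlt2 omega0_pos)
  calc ν + ω = ω * ω * q + (r + ω) := by rw [← hqr, add_assoc]
    _ < ω * ω * q + ω * ω := add_lt_add_right hro _
    _ = ω * ω * (q + 1) := (hms (ω * ω) q).symm
    _ ≤ ω * ω * γ := mul_le_mul_right (Order.add_one_le_iff.2 hqγ) _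
    _ = δ := hγ.symm

lemma exNd (hS : GoodS S) {δ : Ordinal} (hδ : δ ∈ S) (hνδ : ν < δ) : ∃ n : ℕ, ¬ (D.eta δ (D.kk δ n) < ν + Ordinal.omega0) := by
  obtain ⟨m, hm⟩ := (D.ladder δ hδ).cofinal (ν + Ordinal.omega0) (nuomega_lt_delta hS hδ hνδ)
  refine ⟨m, not_lt.2 ?_⟩
  have h1 : D.eta δ m ≤ D.eta δ (D.kk δ m) :=
    (D.ladder δ hδ).strictMono.monotone (D.kk_mono δ hδ).le_apply
  exact le_of_lt (lt_of_lt_of_le hm h1)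

lemma Nd_eq (hS : GoodS S) {δ : Ordinal} (hδ : δ ∈ S) (hνδ : ν < δ) : Nd S D ν δ = Nat.find (exNd (D := D) hS hδ hνδ) := by
  rw [Nd, dif_pos (exNd hS hδ hνδ)]

lemma blockLow (hS : GoodS S) {δ : Ordinal} (hδ : δ ∈ S) (hνδ : ν < δ) {i : ℕ} (hi : i < Nd S D ν δ) {l : ℕ} (hl : l < D.kk δ (i + 1) - D.kk δ i) :
    D.eta δ (D.kk δ i + l) < ν + Ordinal.omega0 := by
  rw [Nd_eq hS hδ hνδ] at hi
  have hki : D.eta δ (D.kk δ i) < ν + Ordinal.omega0 := not_not.1 (Nat.find_min _ hi)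
  have ht : 0 < D.kk δ (i + 1) - D.kk δ i := Nat.sub_pos_of_lt (D.kk_mono δ hδ (lt_add_one i))
  have heq : D.eta δ (D.kk δ i + l) + Ordinal.omega0 = D.eta δ (D.kk δ i) + Ordinal.omega0 := by
    have := (D.special δ hδ i).1 l hl 0 ht
    simpa using this
  have : D.eta δ (D.kk δ i + l) + Ordinal.omega0 ≤ ν + Ordinal.omega0 := by
    rw [heq]; exact (lt_nu_omega_iff ν _).1 hki
  exact lt_of_lt_of_le (lt_add_of_pos_right _ omega0_pos) this

lemma blockHigh (hS : GoodS S) {δ : Ordinal} (hδ : δ ∈ S) (hνδ : ν < δ) {i : ℕ} (hi : Nd S D ν δ ≤ i) {l : ℕ} (hl : l < D.kk δ (i + 1) - D.kk δ i) :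
    ¬ (D.eta δ (D.kk δ i + l) < ν + Ordinal.omega0) := by
  rw [Nd_eq hS hδ hνδ] at hi
  have hN : ¬ (D.eta δ (D.kk δ (Nat.find (exNd (D := D) hS hδ hνδ))) < ν + Ordinal.omega0) :=
    Nat.find_spec (exNd hS hδ hνδ)
  have hmono : D.eta δ (D.kk δ (Nat.find (exNd (D := D) hS hδ hνδ))) ≤ D.eta δ (D.kk δ i) :=
    (D.ladder δ hδ).strictMono.monotone ((D.kk_mono δ hδ).monotone hi)
  intro hcon
  have ht : 0 < D.kk δ (i + 1) - D.kk δ i := Nat.sub_pos_of_lt (D.kk_mono δ hδ (lt_add_one i))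
  have heq : D.eta δ (D.kk δ i + l) + Ordinal.omega0 = D.eta δ (D.kk δ i) + Ordinal.omega0 := by
    have := (D.special δ hδ i).1 l hl 0 ht
    simpa using this
  have h1 : D.eta δ (D.kk δ i) + Ordinal.omega0 ≤ ν + Ordinal.omega0 := by
    rw [← heq]; exact (lt_nu_omega_iff ν _).1 hcon
  have h2 : D.eta δ (D.kk δ i) < ν + Ordinal.omega0 :=
    lt_of_lt_of_le (lt_add_of_pos_right _ omega0_pos) h1
  exact hN (lt_of_le_of_lt hmono h2)

end delta

lemma Pmap_wvec_of_low {δ : Ordinal} {i : ℕ}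
    (h : ∀ l < D.kk δ (i + 1) - D.kk δ i, D.eta δ (D.kk δ i + l) < ν + Ordinal.omega0) :
    Stmt6.Pmap S D ν (wvec S D δ i) = wvec S D δ i := by
  rw [wvec, map_sum]
  exact Finset.sum_congr rfl fun l hl => by
    rw [map_zsmul, Pmap_xgen, if_pos (h l (Finset.mem_range.1 hl))]

lemma Pmap_wvec_of_high {δ : Ordinal} {i : ℕ}
    (h : ∀ l < D.kk δ (i + 1) - D.kk δ i, ¬ (D.eta δ (D.kk δ i + l) < ν + Ordinal.omega0)) :
    Stmt6.Pmap S D ν (wvec S D δ i) = 0 := by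
  rw [wvec, map_sum]
  refine Finset.sum_eq_zero fun l hl => ?_
  rw [map_zsmul, Pmap_xgen, if_neg (h l (Finset.mem_range.1 hl)), smul_zero]

lemma xgen_mem_G {β : Ordinal} (hβ : β < ω₁) : xgen β ∈ Ggrp S D :=
  AddSubgroup.subset_closure (Or.inl ⟨β, hβ, rfl⟩)

lemma zgen_mem_G {δ : Ordinal} (hδ : δ ∈ S) (n : ℕ) :
    zgen D.eta D.kk D.a D.psi δ n ∈ Ggrp S D :=
  AddSubgroup.subset_closure (Or.inr ⟨δ, hδ, n, rfl⟩)

lemma xgen_mem_V {β : Ordinal} (hβ : β < ν + Ordinal.omega0) : xgen β ∈ Vsp S ν :=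
  Submodule.subset_span (Or.inl ⟨β, hβ, rfl⟩)

lemma ygen_mem_V {δ : Ordinal} (hδ : δ ∈ S) (hδν : δ < ν) (n : ℕ) : ygen δ n ∈ Vsp S ν :=
  Submodule.subset_span (Or.inr ⟨δ, hδ, hδν, n, rfl⟩)

lemma V_zsmul {g : Fsp} (m : ℤ) (h : g ∈ Vsp S ν) : m • g ∈ Vsp S ν := by
  rw [← Int.cast_smul_eq_zsmul ℚ]
  exact Submodule.smul_mem _ _ h

lemma wvec_mem_G (hS : GoodS S) {δ : Ordinal} (hδ : δ ∈ S) (i : ℕ) :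
    wvec S D δ i ∈ Ggrp S D := by
  refine AddSubgroup.sum_mem _ fun l _ => AddSubgroup.zsmul_mem _ ?_ _
  exact xgen_mem_G S D (lt_trans ((D.ladder δ hδ).lt_delta _) (hS.lt_omega1 δ hδ))

lemma wvec_mem_V {δ : Ordinal} {i : ℕ}
    (h : ∀ l < D.kk δ (i + 1) - D.kk δ i, D.eta δ (D.kk δ i + l) < ν + Ordinal.omega0) :
    wvec S D δ i ∈ Vsp S ν := by
  refine Submodule.sum_mem _ fun l hl => ?_
  exact V_zsmul S ν _ (xgen_mem_V S ν (h l (Finset.mem_range.1 hl)))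

lemma mem_Gfil {g : Fsp} : g ∈ Gfil S D ν ↔ g ∈ Ggrp S D ∧
    ∃ m : ℤ, m ≠ 0 ∧ m • g ∈ (Vsp S ν).toAddSubgroup ⊓ Ggrp S D := Iff.rfl

lemma mem_Gfil_of_VG {g : Fsp} (h1 : g ∈ Ggrp S D) (h2 : g ∈ Vsp S ν) :
    g ∈ Gfil S D ν := by
  refine (mem_Gfil S D ν).2 ⟨h1, 1, one_ne_zero, ?_⟩
  rw [one_zsmul]
  exact AddSubgroup.mem_inf.2 ⟨(Submodule.mem_toAddSubgroup _).2 h2, h1⟩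

lemma Gfil_le : Gfil S D ν ≤ Ggrp S D := fun _ hg => ((mem_Gfil S D ν).1 hg).1

lemma Pmap_z_lt {δ : Ordinal} (hδ : δ ∈ S) (hδν : δ < ν) (n : ℕ) :
    Stmt6.Pmap S D ν (zgen D.eta D.kk D.a D.psi δ n) = zgen D.eta D.kk D.a D.psi δ n := by
  apply smul_right_injective Fsp (Pψ_ne S D n)
  show (Pψ S D n : ℚ) • Stmt6.Pmap S D ν (zgen D.eta D.kk D.a D.psi δ n)
      = (Pψ S D n : ℚ) • zgen D.eta D.kk D.a D.psi δ n
  rw [← map_smul, Lz, map_add, map_sum, Pmap_ygen, if_pos hδν]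
  congr 1
  refine Finset.sum_congr rfl fun i _ => ?_
  rw [map_smul, Pmap_wvec_of_low]
  intro l _
  exact lt_of_lt_of_le (lt_trans ((D.ladder δ hδ).lt_delta _) hδν) le_self_add

lemma Pmap_z_le (hS : GoodS S) {δ : Ordinal} (hδ : δ ∈ S) (hνδ : ν < δ) {n : ℕ}
    (hn : n ≤ Nd S D ν δ) :
    Stmt6.Pmap S D ν (zgen D.eta D.kk D.a D.psi δ n) =
      - ∑ i ∈ Finset.Ico n (Nd S D ν δ),
          ((∏ j ∈ Finset.Ico n i, D.psi j : ℕ) : ℚ) • wvec S D δ i := by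
  apply smul_right_injective Fsp (Pψ_ne S D n)
  show (Pψ S D n : ℚ) • Stmt6.Pmap S D ν (zgen D.eta D.kk D.a D.psi δ n)
      = (Pψ S D n : ℚ) • (- ∑ i ∈ Finset.Ico n (Nd S D ν δ),
          ((∏ j ∈ Finset.Ico n i, D.psi j : ℕ) : ℚ) • wvec S D δ i)
  rw [← map_smul, Lz, map_add, map_sum, Pmap_ygen, if_neg (not_lt.2 hνδ.le),
    if_pos ⟨rfl, hδ, hνδ⟩, ylow_eq]
  have hw : ∀ i ∈ Finset.range n,
      Stmt6.Pmap S D ν ((Pψ S D i : ℚ) • wvec S D δ i) = (Pψ S D i : ℚ) • wvec S D δ i := by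
    intro i hi
    rw [map_smul, Pmap_wvec_of_low]
    exact fun l hl => blockLow hS hδ hνδ (lt_of_lt_of_le (Finset.mem_range.1 hi) hn) hl
  rw [Finset.sum_congr rfl hw]
  have hsplit : ∑ i ∈ Finset.range (Nd S D ν δ), (Pψ S D i : ℚ) • wvec S D δ i
      = ∑ i ∈ Finset.range n, (Pψ S D i : ℚ) • wvec S D δ i
        + ∑ i ∈ Finset.Ico n (Nd S D ν δ), (Pψ S D i : ℚ) • wvec S D δ i := by
    rw [Finset.range_eq_Ico, Finset.range_eq_Ico]
    exact (Finset.sum_Ico_consecutive _ (Nat.zero_le n) hn).symm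
  rw [hsplit, smul_neg, Finset.smul_sum]
  have hterm : ∀ i ∈ Finset.Ico n (Nd S D ν δ),
      (Pψ S D n : ℚ) • (((∏ j ∈ Finset.Ico n i, D.psi j : ℕ) : ℚ) • wvec S D δ i)
        = (Pψ S D i : ℚ) • wvec S D δ i := by
    intro i hi
    rw [smul_smul]
    congr 1
    rw [← Nat.cast_mul]
    congr 1
    rw [Pψ, Pψ, Finset.range_eq_Ico, Finset.range_eq_Ico]
    exact Finset.prod_Ico_consecutive _ (Nat.zero_le n) (Finset.mem_Ico.1 hi).1
  rw [Finset.sum_congr rfl hterm]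
  abel

lemma Pmap_z_ge (hS : GoodS S) {δ : Ordinal} (hδ : δ ∈ S) (hνδ : ν < δ) {n : ℕ}
    (hn : Nd S D ν δ ≤ n) :
    Stmt6.Pmap S D ν (zgen D.eta D.kk D.a D.psi δ n) = 0 := by
  apply smul_right_injective Fsp (Pψ_ne S D n)
  show (Pψ S D n : ℚ) • Stmt6.Pmap S D ν (zgen D.eta D.kk D.a D.psi δ n) = (Pψ S D n : ℚ) • (0 : Fsp)
  rw [smul_zero, ← map_smul, Lz, map_add, map_sum, Pmap_ygen, if_neg (not_lt.2 hνδ.le),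
    if_pos ⟨rfl, hδ, hνδ⟩, ylow_eq]
  have hsplit : ∑ i ∈ Finset.range n, Stmt6.Pmap S D ν ((Pψ S D i : ℚ) • wvec S D δ i)
      = ∑ i ∈ Finset.range (Nd S D ν δ), Stmt6.Pmap S D ν ((Pψ S D i : ℚ) • wvec S D δ i)
        + ∑ i ∈ Finset.Ico (Nd S D ν δ) n, Stmt6.Pmap S D ν ((Pψ S D i : ℚ) • wvec S D δ i) := by
    rw [Finset.range_eq_Ico, Finset.range_eq_Ico]
    exact (Finset.sum_Ico_consecutive _ (Nat.zero_le _) hn).symm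
  rw [hsplit]
  have h1 : ∀ i ∈ Finset.range (Nd S D ν δ),
      Stmt6.Pmap S D ν ((Pψ S D i : ℚ) • wvec S D δ i) = (Pψ S D i : ℚ) • wvec S D δ i := by
    intro i hi
    rw [map_smul, Pmap_wvec_of_low]
    exact fun l hl => blockLow hS hδ hνδ (Finset.mem_range.1 hi) hl
  have h2 : ∀ i ∈ Finset.Ico (Nd S D ν δ) n,
      Stmt6.Pmap S D ν ((Pψ S D i : ℚ) • wvec S D δ i) = 0 := by
    intro i hi
    rw [map_smul, Pmap_wvec_of_high, smul_zero]
    exact fun l hl => blockHigh hS hδ hνδ (Finset.mem_Ico.1 hi).1 hl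
  rw [Finset.sum_congr rfl h1, Finset.sum_congr rfl h2]
  simp

lemma Pmap_pb (hS : GoodS S) (i : FIdx) : Stmt6.Pmap S D ν (pb S D ν i) = pb S D ν i := by
  cases i with
  | inl β =>
    by_cases h : β < ν + Ordinal.omega0
    · simp [pb, h, Pmap_xgen]
    · simp [pb, h]
  | inr p =>
    obtain ⟨δ, n⟩ := p
    by_cases h1 : δ < ν
    · simp only [pb, if_pos h1]
      rw [Pmap_ygen, if_pos h1]
    · by_cases h2 : n = 0 ∧ δ ∈ S ∧ ν < δ
      · simp only [pb, if_neg h1, if_pos h2]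
        rw [ylow_eq, map_neg, map_sum]
        congr 1
        refine Finset.sum_congr rfl fun i hi => ?_
        rw [map_smul, Pmap_wvec_of_low]
        exact fun l hl => blockLow hS h2.2.1 h2.2.2 (Finset.mem_range.1 hi) hl
      · simp [pb, h1, h2]

lemma Pmap_idem (hS : GoodS S) (f : Fsp) : Stmt6.Pmap S D ν (Stmt6.Pmap S D ν f) = Stmt6.Pmap S D ν f := by
  induction f using Finsupp.induction_linear with
  | zero => simp
  | add f g hf hg => rw [map_add, map_add, hf, hg]
  | single a b => rw [Pmap_single, map_smul, Pmap_pb S D ν hS]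

lemma Pmap_fix_V {g : Fsp} (hg : g ∈ Vsp S ν) : Stmt6.Pmap S D ν g = g := by
  have hle : Vsp S ν ≤ LinearMap.eqLocus (Stmt6.Pmap S D ν) LinearMap.id := by
    rw [Vsp, Submodule.span_le]
    rintro f (⟨β, hβ, rfl⟩ | ⟨δ, hδ, hδν, n, rfl⟩) <;>
      simp only [SetLike.mem_coe, LinearMap.mem_eqLocus, LinearMap.id_coe, id_eq]
    · rw [Pmap_xgen, if_pos hβ]
    · rw [Pmap_ygen, if_pos hδν]
  exact hle hg

lemma Pmap_fix_Gfil {g : Fsp} (hg : g ∈ Gfil S D ν) : Stmt6.Pmap S D ν g = g := by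
  obtain ⟨-, m, hm, hmem⟩ := (mem_Gfil S D ν).1 hg
  have hV : m • g ∈ Vsp S ν :=
    (Submodule.mem_toAddSubgroup _).1 (AddSubgroup.mem_inf.1 hmem).1
  have h1 : Stmt6.Pmap S D ν ((m : ℚ) • g) = (m : ℚ) • g := by
    rw [Int.cast_smul_eq_zsmul]
    exact Pmap_fix_V S D ν hV
  rw [map_smul] at h1
  exact smul_right_injective Fsp (show (m : ℚ) ≠ 0 from Int.cast_ne_zero.2 hm) h1

lemma Pmap_mem_Gfil (hS : GoodS S) (hν2 : ν ∉ S) {g : Fsp} (hg : g ∈ Ggrp S D) :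
    Stmt6.Pmap S D ν g ∈ Gfil S D ν := by
  refine AddSubgroup.closure_induction (p := fun x _ => Stmt6.Pmap S D ν x ∈ Gfil S D ν)
    (fun f hf => ?_) ?_ (fun x y _ _ px py => ?_) (fun x _ px => ?_) hg
  · rcases hf with ⟨β, hβ, rfl⟩ | ⟨δ, hδ, n, rfl⟩
    · rw [Pmap_xgen]
      by_cases h : β < ν + Ordinal.omega0
      · rw [if_pos h]
        exact mem_Gfil_of_VG S D ν (xgen_mem_G S D hβ) (xgen_mem_V S ν h)
      · rw [if_neg h]; exact zero_mem _
    · rcases lt_trichotomy δ ν with h | h | h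
      · rw [Pmap_z_lt S D ν hδ h n]
        refine (mem_Gfil S D ν).2 ⟨zgen_mem_G S D hδ n, (Pψ S D n : ℤ), ?_, ?_⟩
        · exact Int.natCast_ne_zero.2 (Pψ_ne0 S D n)
        · have hz : (Pψ S D n : ℤ) • zgen D.eta D.kk D.a D.psi δ n
              = ygen δ 0 + ∑ i ∈ Finset.range n, (Pψ S D i : ℤ) • wvec S D δ i := by
            rw [← Int.cast_smul_eq_zsmul ℚ, Int.cast_natCast, Lz]
            congr 1
          rw [hz]
          have hwlow : ∀ i : ℕ, ∀ l < D.kk δ (i + 1) - D.kk δ i,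
              D.eta δ (D.kk δ i + l) < ν + Ordinal.omega0 := fun i l _ =>
            lt_of_lt_of_le (lt_trans ((D.ladder δ hδ).lt_delta _) h) le_self_add
          refine AddSubgroup.mem_inf.2 ⟨(Submodule.mem_toAddSubgroup _).2 ?_, ?_⟩
          · exact Submodule.add_mem _ (ygen_mem_V S ν hδ h 0)
              (Submodule.sum_mem _ fun i _ => V_zsmul S ν _ (wvec_mem_V S D ν (hwlow i)))
          · refine AddSubgroup.add_mem _ (zgen_mem_G S D hδ 0) ?_
            exact AddSubgroup.sum_mem _ fun i _ =>
              AddSubgroup.zsmul_mem _ (wvec_mem_G S D hS hδ i) _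
      · exact absurd (h ▸ hδ) hν2
      · by_cases hn : n ≤ Nd S D ν δ
        · rw [Pmap_z_le S D ν hS hδ h hn]
          have heq : (- ∑ i ∈ Finset.Ico n (Nd S D ν δ),
                ((∏ j ∈ Finset.Ico n i, D.psi j : ℕ) : ℚ) • wvec S D δ i)
              = - ∑ i ∈ Finset.Ico n (Nd S D ν δ),
                ((∏ j ∈ Finset.Ico n i, D.psi j : ℕ) : ℤ) • wvec S D δ i := by
            congr 1
          rw [heq]
          refine mem_Gfil_of_VG S D ν ?_ ?_
          · exact AddSubgroup.neg_mem _ (AddSubgroup.sum_mem _ fun i _ =>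
              AddSubgroup.zsmul_mem _ (wvec_mem_G S D hS hδ i) _)
          · refine Submodule.neg_mem _ (Submodule.sum_mem _ fun i hi => V_zsmul S ν _ ?_)
            exact wvec_mem_V S D ν fun l hl =>
              blockLow hS hδ h (Finset.mem_Ico.1 hi).2 hl
        · rw [Pmap_z_ge S D ν hS hδ h (le_of_not_ge hn)]
          exact zero_mem _
  · show Stmt6.Pmap S D ν 0 ∈ Gfil S D ν
    rw [map_zero]; exact zero_mem _
  · show Stmt6.Pmap S D ν (x + y) ∈ Gfil S D ν
    rw [map_add]; exact add_mem px py
  · show Stmt6.Pmap S D ν (-x) ∈ Gfil S D ν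
    rw [map_neg]; exact neg_mem px


end Stmt6

theorem statement6 (S : Set Ordinal) (hS : GoodS S) (D : GroupData S)
    (ν : Ordinal) (hν1 : ν < ω₁) (hν2 : ν ∉ S) :
    (∃ π : ↥(Ggrp S D) →+ ↥(Ggrp S D),
      (∀ g : ↥(Ggrp S D), (π g : Fsp) ∈ Gfil S D ν) ∧
      (∀ g : ↥(Ggrp S D), (g : Fsp) ∈ Gfil S D ν → π g = g)) ∧
    IsDirectSummandIn (Gfil S D ν) (Ggrp S D) := by
  classical
  have hPG : ∀ g ∈ Ggrp S D, Stmt6.Pmap S D ν g ∈ Gfil S D ν := fun g hg =>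
    Stmt6.Pmap_mem_Gfil S D ν hS hν2 hg
  constructor
  · refine ⟨AddMonoidHom.mk' (fun g => ⟨Stmt6.Pmap S D ν g,
      Stmt6.Gfil_le S D ν (hPG g g.2)⟩) ?_, fun g => hPG g g.2, fun g hg => ?_⟩
    · intro a b
      ext
      simp [map_add]
    · exact Subtype.ext (Stmt6.Pmap_fix_Gfil S D ν hg)
  · refine ⟨Stmt6.Gfil_le S D ν,
      Ggrp S D ⊓ (LinearMap.ker (Stmt6.Pmap S D ν)).toAddSubgroup, inf_le_left, ?_, ?_⟩
    · rw [eq_bot_iff]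
      intro g hg
      obtain ⟨hg1, hg2⟩ := AddSubgroup.mem_inf.1 hg
      have h1 : Stmt6.Pmap S D ν g = g := Stmt6.Pmap_fix_Gfil S D ν hg1
      have h2 : Stmt6.Pmap S D ν g = 0 :=
        LinearMap.mem_ker.1 ((Submodule.mem_toAddSubgroup _).1 (AddSubgroup.mem_inf.1 hg2).2)
      rw [AddSubgroup.mem_bot, ← h1, h2]
    · refine le_antisymm (sup_le (Stmt6.Gfil_le S D ν) inf_le_left) ?_
      intro g hg
      have h1 : Stmt6.Pmap S D ν g ∈ Gfil S D ν := hPG g hg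
      have h2 : g - Stmt6.Pmap S D ν g ∈ Ggrp S D ⊓ (LinearMap.ker (Stmt6.Pmap S D ν)).toAddSubgroup := by
        refine AddSubgroup.mem_inf.2 ⟨sub_mem hg (Stmt6.Gfil_le S D ν h1), ?_⟩
        refine (Submodule.mem_toAddSubgroup _).2 (LinearMap.mem_ker.2 ?_)
        rw [map_sub, Stmt6.Pmap_idem S D ν hS]
        exact sub_self _
      have h3 := add_mem (AddSubgroup.mem_sup_left h1) (AddSubgroup.mem_sup_right h2)
      simpa using h3

end
end

section
/- Let η̄ be a special ladder system on S and let α < ω₁. Then there exists a family ⟨m_δ : δ ∈ S∩α⟩ of natural numbers such that the sets {η_δ(kₙ^δ)+ω : n ≥ m_δ} (for δ ∈ S∩α) are pairwise disjoint. In particular, the sets {η_δ(kₙ^δ+i) : n ≥ m_δ, i < tₙ^δ} (for δ ∈ S∩α) are then pairwise disjoint. -/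
set_option autoImplicit false
noncomputable section

open Ordinal Cardinal

theorem statement9 (S : Set Ordinal) (hS : GoodS S) (L : LadderSystem S)
    (α : Ordinal) (hα : α < ω₁) :
    ∃ m : Ordinal → ℕ,
      (∀ δ₁, δ₁ ∈ S → δ₁ < α → ∀ δ₂, δ₂ ∈ S → δ₂ < α → δ₁ ≠ δ₂ →
        Disjoint
          {o : Ordinal | ∃ n : ℕ, m δ₁ ≤ n ∧ o = L.eta δ₁ (L.kk δ₁ n) + Ordinal.omega0}
          {o : Ordinal | ∃ n : ℕ, m δ₂ ≤ n ∧ o = L.eta δ₂ (L.kk δ₂ n) + Ordinal.omega0}) ∧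
      (∀ δ₁, δ₁ ∈ S → δ₁ < α → ∀ δ₂, δ₂ ∈ S → δ₂ < α → δ₁ ≠ δ₂ →
        Disjoint
          {o : Ordinal | ∃ n : ℕ, m δ₁ ≤ n ∧
            ∃ i < L.kk δ₁ (n + 1) - L.kk δ₁ n, o = L.eta δ₁ (L.kk δ₁ n + i)}
          {o : Ordinal | ∃ n : ℕ, m δ₂ ≤ n ∧
            ∃ i < L.kk δ₂ (n + 1) - L.kk δ₂ n, o = L.eta δ₂ (L.kk δ₂ n + i)}) := by
  classical
  by_cases hne : (S ∩ Set.Iio α).Nonempty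
  swap
  · refine ⟨fun _ => 0, ?_, ?_⟩ <;>
      exact fun δ₁ h1 h1' _ _ _ _ =>
        absurd (⟨h1, h1'⟩ : δ₁ ∈ S ∩ Set.Iio α) (fun h => hne ⟨δ₁, h⟩)
  -- countability of S ∩ Iio α
  have hcount : (S ∩ Set.Iio α).Countable := by
    have hIio : (Set.Iio α).Countable := by
      rw [← Cardinal.le_aleph0_iff_set_countable, Ordinal.mk_Iio_ordinal]
      have hcard : α.card ≤ Cardinal.aleph0 := by
        have h1 : α < (Cardinal.aleph 1).ord := by rwa [Cardinal.ord_aleph]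
        have h2 : α.card < Cardinal.aleph 1 := Cardinal.lt_ord.mp h1
        rwa [← Cardinal.succ_aleph0, Order.lt_succ_iff] at h2
      exact le_trans (Cardinal.lift_le.mpr hcard) Cardinal.lift_aleph0.le
    exact hIio.mono Set.inter_subset_right
  obtain ⟨e, he⟩ := hcount.exists_eq_range hne
  -- closure of elements of S under adding ω
  have hclose : ∀ δ ∈ S, ∀ β < δ, β + Ordinal.omega0 < δ := by
    intro δ hδ β hβ
    obtain ⟨q, hq⟩ := hS.omega_sq_dvd δ hδ
    have hb0 : (Ordinal.omega0 ^ 2 : Ordinal) ≠ 0 :=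
      pow_ne_zero 2 Ordinal.omega0_ne_zero
    have hdm := Ordinal.div_add_mod β (Ordinal.omega0 ^ 2)
    have hdlt : β / Ordinal.omega0 ^ 2 < q := by
      rw [Ordinal.div_lt hb0, ← hq]; exact hβ
    have hrlt : β % Ordinal.omega0 ^ 2 < Ordinal.omega0 ^ 2 :=
      Ordinal.mod_lt β hb0
    have hgen : ∀ r : Ordinal, r < Ordinal.omega0 * Ordinal.omega0 →
        r + Ordinal.omega0 < Ordinal.omega0 * Ordinal.omega0 := by
      intro r hr
      obtain ⟨n, hn, hrn⟩ := (Ordinal.lt_mul_iff_of_isSuccLimit Ordinal.isSuccLimit_omega0).mp hr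
      calc r + Ordinal.omega0 ≤ Ordinal.omega0 * n + Ordinal.omega0 :=
            add_le_add_left hrn.le _
        _ = Ordinal.omega0 * Order.succ n := (Ordinal.mul_succ _ _).symm
        _ < Ordinal.omega0 * Ordinal.omega0 :=
            mul_lt_mul_of_pos_left (Ordinal.isSuccLimit_omega0.succ_lt hn)
              Ordinal.omega0_pos
    have hr2 : β % Ordinal.omega0 ^ 2 + Ordinal.omega0 < Ordinal.omega0 ^ 2 := by
      rw [pow_two]
      exact hgen _ (by rw [← pow_two]; exact hrlt)
    calc β + Ordinal.omega0
        = Ordinal.omega0 ^ 2 * (β / Ordinal.omega0 ^ 2) +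
            (β % Ordinal.omega0 ^ 2 + Ordinal.omega0) := by
          rw [← add_assoc, hdm]
      _ < Ordinal.omega0 ^ 2 * (β / Ordinal.omega0 ^ 2) + Ordinal.omega0 ^ 2 :=
          add_lt_add_right hr2 _
      _ = Ordinal.omega0 ^ 2 * Order.succ (β / Ordinal.omega0 ^ 2) := by
          rw [Ordinal.mul_succ]
      _ ≤ Ordinal.omega0 ^ 2 * q :=
          mul_le_mul_right (Order.succ_le_of_lt hdlt) _
      _ = δ := hq.symm
  -- thresholds: beyond N δ β, the ladder terms at the k's exceed β
  have hcofN : ∀ δ β : Ordinal, ∃ M : ℕ,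
      (δ ∈ S ∧ β < δ) → ∀ n : ℕ, M ≤ n → β < L.eta δ (L.kk δ n) := by
    intro δ β
    by_cases h : δ ∈ S ∧ β < δ
    · obtain ⟨n, hn⟩ := (L.ladder δ h.1).cofinal β h.2
      refine ⟨n, fun _ n' hn' => lt_of_lt_of_le hn ?_⟩
      exact (L.ladder δ h.1).strictMono.monotone
        (hn'.trans (L.kk_mono δ h.1).le_apply)
    · exact ⟨0, fun h' => absurd h' h⟩
  choose N hN using hcofN
  -- index of δ in the enumeration
  have hidx0 : ∀ δ : Ordinal, ∃ i : ℕ, δ ∈ S ∩ Set.Iio α → e i = δ := by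
    intro δ
    by_cases h : δ ∈ S ∩ Set.Iio α
    · have : δ ∈ Set.range e := he ▸ h
      obtain ⟨i, hi⟩ := this
      exact ⟨i, fun _ => hi⟩
    · exact ⟨0, fun h' => absurd h' h⟩
  choose idx hidx using hidx0
  -- the forbidden bounds
  set c : Ordinal → ℕ → Ordinal := fun δ j =>
    if e j < δ then e j
    else (Finset.range (N (e j) δ)).sup (fun n =>
      if L.eta (e j) (L.kk (e j) n) + Ordinal.omega0 < δ
      then L.eta (e j) (L.kk (e j) n) + Ordinal.omega0 else 0) with hcdef
  set C : Ordinal → Ordinal := fun δ => (Finset.range (idx δ)).sup (c δ) with hCdef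
  have hCδ : ∀ δ ∈ S, C δ < δ := by
    intro δ hδ
    have hδ0 : (⊥ : Ordinal) < δ := by
      rw [Ordinal.bot_eq_zero]; exact (hS.isLimit δ hδ).pos
    rw [hCdef, Finset.sup_lt_iff hδ0]
    intro j _
    rw [hcdef]
    dsimp only
    split_ifs with h1
    · exact h1
    · rw [Finset.sup_lt_iff hδ0]
      intro n _
      split_ifs with h2
      · exact h2
      · exact hδ0
  have htail : ∀ δ ∈ S, ∀ n : ℕ, N δ (C δ) ≤ n → C δ < L.eta δ (L.kk δ n) :=
    fun δ hδ n hn => hN δ (C δ) ⟨hδ, hCδ δ hδ⟩ n hn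
  -- key bound: terms of other ladders below δ are bounded by C δ
  have key : ∀ δ : Ordinal, ∀ j : ℕ, ∀ δ' : Ordinal, j < idx δ → e j = δ' → δ' ∈ S →
      δ' ≠ δ → ∀ n : ℕ, L.eta δ' (L.kk δ' n) + Ordinal.omega0 < δ →
      L.eta δ' (L.kk δ' n) + Ordinal.omega0 ≤ C δ := by
    intro δ j δ' hj hej hδ' hne' n hv
    have hle : c δ j ≤ C δ := Finset.le_sup (Finset.mem_range.mpr hj)
    refine le_trans ?_ hle
    rw [hcdef]
    dsimp only
    rw [hej]
    split_ifs with h1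
    · -- δ' < δ : the term is < δ' = c δ j
      have : L.eta δ' (L.kk δ' n) + Ordinal.omega0 < δ' :=
        hclose δ' hδ' _ ((L.ladder δ' hδ').lt_delta _)
      exact this.le
    · -- δ < δ' : the term has index < N δ' δ
      have hlt : δ < δ' := lt_of_le_of_ne (not_lt.mp h1) (Ne.symm hne')
      have hn : n < N δ' δ := by
        by_contra hcon
        have := hN δ' δ ⟨hδ', hlt⟩ n (not_lt.mp hcon)
        have h2 : δ < L.eta δ' (L.kk δ' n) + Ordinal.omega0 :=
          this.trans (lt_add_of_pos_right _ Ordinal.omega0_pos)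
        exact absurd hv (not_lt.mpr h2.le)
      have hmem : n ∈ Finset.range (N δ' δ) := Finset.mem_range.mpr hn
      have := Finset.le_sup (f := fun n =>
        if L.eta δ' (L.kk δ' n) + Ordinal.omega0 < δ
        then L.eta δ' (L.kk δ' n) + Ordinal.omega0 else 0) hmem
      simpa only [if_pos hv] using this
  -- the choice of m
  have main1 : ∀ δ₁, δ₁ ∈ S → δ₁ < α → ∀ δ₂, δ₂ ∈ S → δ₂ < α → δ₁ ≠ δ₂ →
      Disjoint
        {o : Ordinal | ∃ n : ℕ, N δ₁ (C δ₁) ≤ n ∧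
          o = L.eta δ₁ (L.kk δ₁ n) + Ordinal.omega0}
        {o : Ordinal | ∃ n : ℕ, N δ₂ (C δ₂) ≤ n ∧
          o = L.eta δ₂ (L.kk δ₂ n) + Ordinal.omega0} := by
    have aux : ∀ δ₁ δ₂ : Ordinal, δ₁ ∈ S → δ₁ < α → δ₂ ∈ S → δ₂ < α → δ₁ ≠ δ₂ →
        idx δ₁ < idx δ₂ → ∀ v : Ordinal,
        (∃ n : ℕ, N δ₁ (C δ₁) ≤ n ∧ v = L.eta δ₁ (L.kk δ₁ n) + Ordinal.omega0) →
        (∃ n : ℕ, N δ₂ (C δ₂) ≤ n ∧ v = L.eta δ₂ (L.kk δ₂ n) + Ordinal.omega0) → False := by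
      intro δ₁ δ₂ h1 h1' h2 h2' hne12 hij v ⟨n₁, hn₁, hv₁⟩ ⟨n₂, hn₂, hv₂⟩
      have he1 : e (idx δ₁) = δ₁ := hidx δ₁ ⟨h1, h1'⟩
      have hvδ₂ : v < δ₂ := by
        rw [hv₂]
        exact hclose δ₂ h2 _ ((L.ladder δ₂ h2).lt_delta _)
      have hkey : v ≤ C δ₂ := by
        rw [hv₁] at hvδ₂ ⊢
        exact key δ₂ (idx δ₁) δ₁ hij he1 h1 hne12 n₁ hvδ₂
      have hbig : C δ₂ < v := by
        rw [hv₂]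
        exact (htail δ₂ h2 n₂ hn₂).trans (lt_add_of_pos_right _ Ordinal.omega0_pos)
      exact absurd hkey (not_le.mpr hbig)
    intro δ₁ h1 h1' δ₂ h2 h2' hne12
    rw [Set.disjoint_left]
    rintro v hv1 hv2
    have he1 : e (idx δ₁) = δ₁ := hidx δ₁ ⟨h1, h1'⟩
    have he2 : e (idx δ₂) = δ₂ := hidx δ₂ ⟨h2, h2'⟩
    have hidxne : idx δ₁ ≠ idx δ₂ := by
      intro h
      apply hne12
      rw [← he1, ← he2, h]
    rcases hidxne.lt_or_gt with h | h
    · exact aux δ₁ δ₂ h1 h1' h2 h2' hne12 h v hv1 hv2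
    · exact aux δ₂ δ₁ h2 h2' h1 h1' (Ne.symm hne12) h v hv2 hv1
  refine ⟨fun δ => N δ (C δ), main1, ?_⟩
  -- second part follows from the first
  intro δ₁ h1 h1' δ₂ h2 h2' hne12
  rw [Set.disjoint_left]
  rintro o ⟨n₁, hn₁, i₁, hi₁, ho₁⟩ ⟨n₂, hn₂, i₂, hi₂, ho₂⟩
  have hsp₁ := ((L.special δ₁ h1) n₁).1 i₁ hi₁ 0 (Nat.lt_of_le_of_lt (Nat.zero_le _) hi₁)
  have hsp₂ := ((L.special δ₂ h2) n₂).1 i₂ hi₂ 0 (Nat.lt_of_le_of_lt (Nat.zero_le _) hi₂)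
  rw [Nat.add_zero] at hsp₁ hsp₂
  have hmem₁ : o + Ordinal.omega0 ∈
      {o : Ordinal | ∃ n : ℕ, N δ₁ (C δ₁) ≤ n ∧
        o = L.eta δ₁ (L.kk δ₁ n) + Ordinal.omega0} :=
    ⟨n₁, hn₁, by rw [ho₁, hsp₁]⟩
  have hmem₂ : o + Ordinal.omega0 ∈
      {o : Ordinal | ∃ n : ℕ, N δ₂ (C δ₂) ≤ n ∧
        o = L.eta δ₂ (L.kk δ₂ n) + Ordinal.omega0} :=
    ⟨n₂, hn₂, by rw [ho₂, hsp₂]⟩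
  exact Set.disjoint_left.mp (main1 δ₁ h1 h1' δ₂ h2 h2' hne12) hmem₁ hmem₂


end
end

section
/- Let η̄ be a special ladder system on S which has ℵ₀-uniformization, and let G_η̄ be the associated group built with ψ(n) = n!. Then Ext(G_η̄, N) = 0 for every countable abelian group N: for every abelian group H and every surjective homomorphism p : H → G_η̄ whose kernel is countable, there is a homomorphism s : G_η̄ → H with p ∘ s = id. -/
set_option autoImplicit false
noncomputable section

open Ordinal Cardinal

/-- `η̄` has `Λ`-uniformization: every family of colors `c_δ : ω → Λ` can be uniformized. -/
def HasUniformization (S : Set Ordinal) (eta : Ordinal → ℕ → Ordinal) (Λ : Type) : Prop :=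
  ∀ c : Ordinal → ℕ → Λ, ∃ Ψ : Ordinal → Λ, ∃ Ψs : Ordinal → ℕ,
    ∀ δ ∈ S, ∀ n : ℕ, Ψs δ ≤ n → Ψ (eta δ n) = c δ n

/-- `η̄` is tree-like. -/
def TreeLike (S : Set Ordinal) (eta : Ordinal → ℕ → Ordinal) : Prop :=
  ∀ δ ∈ S, ∀ δ' ∈ S, ∀ n m : ℕ, eta δ n = eta δ' m →
    m = n ∧ ∀ k ≤ n, eta δ k = eta δ' k

section Lemmas
variable (eta : Ordinal → ℕ → Ordinal) (kk : Ordinal → ℕ → ℕ)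
    (a : Ordinal → ℕ → ℕ → ℤ) (ψ : ℕ → ℕ)

lemma z_rel (hψ : ∀ n, ψ n ≠ 0) (δ : Ordinal) (n : ℕ) :
    (ψ n : ℤ) • zgen eta kk a ψ δ (n+1)
      = zgen eta kk a ψ δ n +
        ∑ l ∈ Finset.range (kk δ (n + 1) - kk δ n), a δ n l • xgen (eta δ (kk δ n + l)) := by
  have h1 : (ψ n : ℤ) • zgen eta kk a ψ δ (n+1) = ((ψ n : ℤ) : ℚ) • zgen eta kk a ψ δ (n+1) := by
    rw [Int.cast_smul_eq_zsmul]
  rw [h1]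
  show ((ψ n : ℤ) : ℚ) • (((ψ n : ℚ))⁻¹ • _) = _
  rw [smul_smul]
  push_cast
  rw [mul_inv_cancel₀ (by exact_mod_cast hψ n), one_smul]

lemma xgen_inr (β δ : Ordinal) (m : ℕ) : xgen β (Sum.inr (δ, m)) = 0 := by
  simp [xgen, Finsupp.single_apply]

lemma zcoeff (δ δ' : Ordinal) (m : ℕ) (n : ℕ) :
    zgen eta kk a ψ δ n (Sum.inr (δ', m))
      = if δ' = δ ∧ m = 0 then (∏ i ∈ Finset.range n, (ψ i : ℚ))⁻¹ else 0 := by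
  induction n with
  | zero =>
    simp only [zgen, ygen, Finsupp.single_apply, Finset.range_zero, Finset.prod_empty, inv_one]
    by_cases h : δ' = δ ∧ m = 0
    · obtain ⟨h1, h2⟩ := h; subst h1; subst h2; simp
    · rw [if_neg h, if_neg]
      intro he
      apply h
      have := (Sum.inr.inj he)
      exact ⟨(Prod.mk.injEq _ _ _ _ ▸ this).1.symm, ((Prod.mk.injEq _ _ _ _ ▸ this).2).symm⟩
  | succ n ih =>
    show (((ψ n : ℚ))⁻¹ • (zgen eta kk a ψ δ n + _)) (Sum.inr (δ', m)) = _
    rw [Finsupp.smul_apply, Finsupp.add_apply]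
    have hsum : (∑ l ∈ Finset.range (kk δ (n + 1) - kk δ n), a δ n l • xgen (eta δ (kk δ n + l)))
        (Sum.inr (δ', m)) = 0 := by
      rw [Finset.sum_apply']
      apply Finset.sum_eq_zero
      intro l _
      rw [Finsupp.smul_apply, xgen_inr, smul_zero]
    rw [hsum, add_zero, ih]
    by_cases h : δ' = δ ∧ m = 0
    · rw [if_pos h, if_pos h, Finset.prod_range_succ, mul_inv, _root_.smul_eq_mul, mul_comm]
    · rw [if_neg h, if_neg h, smul_zero]

lemma zcoeff_self (δ : Ordinal) (n : ℕ) :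
    zgen eta kk a ψ δ n (Sum.inr (δ, 0)) = (∏ i ∈ Finset.range n, (ψ i : ℚ))⁻¹ := by
  rw [zcoeff]; simp

lemma zcoeff_ne (δ δ' : Ordinal) (h : δ' ≠ δ) (m n : ℕ) :
    zgen eta kk a ψ δ n (Sum.inr (δ', m)) = 0 := by
  rw [zcoeff, if_neg]; tauto

lemma zcoeff_self_ne_zero (hψ : ∀ n, ψ n ≠ 0) (δ : Ordinal) (n : ℕ) :
    zgen eta kk a ψ δ n (Sum.inr (δ, 0)) ≠ 0 := by
  rw [zcoeff_self]
  apply inv_ne_zero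
  apply Finset.prod_ne_zero_iff.2
  intro i _
  exact_mod_cast hψ i

lemma xgen_ne_zgen (hψ : ∀ n, ψ n ≠ 0) (β δ : Ordinal) (n : ℕ) : xgen β ≠ zgen eta kk a ψ δ n := by
  intro h
  apply zcoeff_self_ne_zero eta kk a ψ hψ δ n
  rw [← h, xgen_inr]

lemma zgen_inj (hψ : ∀ n, ψ n ≠ 0) (δ δ' : Ordinal) (n n' : ℕ) (h : zgen eta kk a ψ δ n = zgen eta kk a ψ δ' n') :
    δ = δ' := by
  by_contra hne
  apply zcoeff_self_ne_zero eta kk a ψ hψ δ n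
  rw [h, zcoeff_ne _ _ _ _ δ' δ hne]

lemma xgen_inj : Function.Injective xgen := by
  intro β β' h
  by_contra hne
  have := DFunLike.congr_fun h (Sum.inl β')
  simp only [xgen, Finsupp.single_apply] at this
  rw [if_neg (by simpa using hne)] at this
  simp at this

end Lemmas

-- Bezout
lemma finset_gcd_bezout (s : Finset ℕ) (a : ℕ → ℤ) :
    ∃ b : ℕ → ℤ, ∑ l ∈ s, a l * b l = s.gcd a := by
  induction s using Finset.induction with
  | empty => exact ⟨0, by simp⟩
  | @insert i s hi ih =>
    obtain ⟨b, hb⟩ := ih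
    refine ⟨fun l => if l = i then Int.gcdA (a i) (s.gcd a) else b l * Int.gcdB (a i) (s.gcd a), ?_⟩
    rw [Finset.sum_insert hi, Finset.gcd_insert, ← Int.coe_gcd, Int.gcd_eq_gcd_ab]
    simp only [if_pos rfl]
    congr 1
    rw [← hb, Finset.sum_mul]
    apply Finset.sum_congr rfl
    intro l hl
    rw [if_neg (by rintro rfl; exact hi hl), mul_assoc]


section Master

lemma exists_section (S : Set Ordinal) (hS : GoodS S) (D : GroupData S)
    (H : Type 1) [AddCommGroup H] (p : H →+ ↥(Ggrp S D))
    (hF : Ordinal → H) (u : Ordinal → ℕ → H)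
    (hpF : ∀ β, β < ω₁ → ((p (hF β) : ↥(Ggrp S D)) : Fsp) = xgen β)
    (hpu : ∀ δ ∈ S, ∀ n : ℕ, ((p (u δ n) : ↥(Ggrp S D)) : Fsp) = zgen D.eta D.kk D.a D.psi δ n)
    (hrel : ∀ δ ∈ S, ∀ n : ℕ, (D.psi n : ℤ) • u δ (n+1)
        = u δ n + ∑ l ∈ Finset.range (D.kk δ (n+1) - D.kk δ n),
            D.a δ n l • hF (D.eta δ (D.kk δ n + l))) :
    ∃ s : ↥(Ggrp S D) →+ H, ∀ g : ↥(Ggrp S D), p (s g) = g := by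
  classical
  set Z : Ordinal → ℕ → Fsp := zgen D.eta D.kk D.a D.psi with hZ
  set QSet : Set (Fsp × H) := {q | ∃ β, β < ω₁ ∧ q = (xgen β, hF β)} with hQSet
  set ZSet : Set (Fsp × H) := {q | ∃ δ ∈ S, ∃ n : ℕ, q = (Z δ n, u δ n)} with hZSet
  set T : AddSubgroup (Fsp × H) := AddSubgroup.closure (QSet ∪ ZSet) with hT
  have heta_lt : ∀ δ ∈ S, ∀ m : ℕ, D.eta δ m < ω₁ := by
    intro δ hδ m
    exact lt_trans ((D.ladder δ hδ).lt_delta m) (hS.lt_omega1 δ hδ)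
  -- the pair relation
  have hPrel : ∀ δ ∈ S, ∀ n : ℕ, (D.psi n : ℤ) • ((Z δ (n+1), u δ (n+1)) : Fsp × H)
      = (Z δ n, u δ n) + ∑ l ∈ Finset.range (D.kk δ (n+1) - D.kk δ n),
          D.a δ n l • ((xgen (D.eta δ (D.kk δ n + l)), hF (D.eta δ (D.kk δ n + l))) : Fsp × H) := by
    intro δ hδ n
    apply Prod.ext
    · simpa [Prod.fst_sum] using z_rel D.eta D.kk D.a D.psi D.psi_ne δ n
    · simpa [Prod.snd_sum] using hrel δ hδ n
  -- Lemma A: rewriting down to a single top index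
  have lemA : ∀ δ ∈ S, ∀ N n : ℕ, n ≤ N →
      ((Z δ n, u δ n) : Fsp × H) ∈ Submodule.span ℤ (QSet ∪ {((Z δ N, u δ N) : Fsp × H)}) := by
    intro δ hδ N
    have main : ∀ m : ℕ, ((Z δ (N - m), u δ (N - m)) : Fsp × H)
        ∈ Submodule.span ℤ (QSet ∪ {((Z δ N, u δ N) : Fsp × H)}) := by
      intro m
      induction m with
      | zero =>
        apply Submodule.subset_span
        right
        simp
      | succ m ih =>
        by_cases hc : N - (m + 1) = N - m
        · rw [hc]; exact ih
        · have h1 : N - (m + 1) + 1 = N - m := by omega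
          set n := N - (m + 1) with hn
          have hz : ((Z δ n, u δ n) : Fsp × H)
              = (D.psi n : ℤ) • ((Z δ (n+1), u δ (n+1)) : Fsp × H)
                - ∑ l ∈ Finset.range (D.kk δ (n+1) - D.kk δ n),
                    D.a δ n l • ((xgen (D.eta δ (D.kk δ n + l)), hF (D.eta δ (D.kk δ n + l))) : Fsp × H) := by
            rw [hPrel δ hδ n]; abel
          rw [hz]
          apply sub_mem
          · apply Submodule.smul_mem
            rw [h1]
            exact ih
          · apply Submodule.sum_mem
            intro l _
            apply Submodule.smul_mem
            apply Submodule.subset_span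
            left
            exact ⟨D.eta δ (D.kk δ n + l), heta_lt δ hδ _, rfl⟩
    intro n hn
    have : n = N - (N - n) := by omega
    rw [this]
    exact main (N - n)
  -- the ν-indexed spans
  set PSet : (Ordinal → ℕ) → Set (Fsp × H) :=
    fun ν => {q | ∃ δ ∈ S, q = (Z δ (ν δ), u δ (ν δ))} with hPSet
  set Mspan : (Ordinal → ℕ) → Submodule ℤ (Fsp × H) :=
    fun ν => Submodule.span ℤ (QSet ∪ PSet ν) with hMspan
  have hMono : ∀ ν ν' : Ordinal → ℕ, (∀ δ, ν δ ≤ ν' δ) → Mspan ν ≤ Mspan ν' := by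
    intro ν ν' hle
    apply Submodule.span_le.2
    rintro q (hq | ⟨δ, hδ, rfl⟩)
    · exact Submodule.subset_span (Or.inl hq)
    · refine Submodule.span_le.2 ?_ (lemA δ hδ (ν' δ) (ν δ) (hle δ))
      rintro q (hq | hq)
      · exact Submodule.subset_span (Or.inl hq)
      · rw [Set.mem_singleton_iff] at hq
        subst hq
        exact Submodule.subset_span (Or.inr ⟨δ, hδ, rfl⟩)
  have hTsub : ∀ x ∈ T, ∃ ν : Ordinal → ℕ, x ∈ Mspan ν := by
    intro x hx
    refine AddSubgroup.closure_induction ?_ ?_ ?_ ?_ hx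
    · rintro q (hq | ⟨δ, hδ, n, rfl⟩)
      · exact ⟨fun _ => 0, Submodule.subset_span (Or.inl hq)⟩
      · exact ⟨fun _ => n, Submodule.subset_span (Or.inr ⟨δ, hδ, rfl⟩)⟩
    · exact ⟨fun _ => 0, Submodule.zero_mem _⟩
    · rintro y z _ _ ⟨ν₁, hy⟩ ⟨ν₂, hz⟩
      refine ⟨fun δ => max (ν₁ δ) (ν₂ δ), Submodule.add_mem _ ?_ ?_⟩
      · exact hMono ν₁ _ (fun δ => le_max_left _ _) hy
      · exact hMono ν₂ _ (fun δ => le_max_right _ _) hz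
    · rintro y _ ⟨ν, hy⟩
      exact ⟨ν, Submodule.neg_mem _ hy⟩
  -- Lemma C: the graph property
  have hGraph : ∀ x : Fsp × H, (∃ ν, x ∈ Mspan ν) → x.1 = 0 → x.2 = 0 := by
    rintro x ⟨ν, hx⟩ hx1
    rw [hMspan, Submodule.mem_span_set] at hx
    obtain ⟨c, hsupp, hsum⟩ := hx
    have hxs : x = ∑ g ∈ c.support, c g • g := by
      rw [← hsum]; rfl
    have key : ∀ j : FIdx, ∑ g ∈ c.support, c g • (g.1 j) = 0 := by
      intro j
      have h1 : x.1 = ∑ g ∈ c.support, c g • g.1 := by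
        rw [hxs, Prod.fst_sum]
        exact Finset.sum_congr rfl (fun g _ => Prod.smul_fst _ _)
      have h2 : x.1 j = 0 := by rw [hx1]; rfl
      rw [h1] at h2
      rw [← h2, Finsupp.finset_sum_apply]
      apply Finset.sum_congr rfl
      intro g _
      rw [Finsupp.smul_apply]
    -- coefficients of Z-generators vanish
    have hzc : ∀ g ∈ c.support, g ∈ PSet ν → c g = 0 := by
      rintro g hg ⟨δ, hδ, rfl⟩
      have h0 := key (Sum.inr (δ, 0))
      rw [Finset.sum_eq_single ((Z δ (ν δ), u δ (ν δ)) : Fsp × H)] at h0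
      · simp only at h0
        rw [hZ] at h0
        have hne := zcoeff_self_ne_zero D.eta D.kk D.a D.psi D.psi_ne δ (ν δ)
        have : (c (Z δ (ν δ), u δ (ν δ)) : ℚ) = 0 := by
          by_contra hcc
          exact hne (by
            have := h0
            rw [zsmul_eq_mul] at this
            exact (mul_eq_zero.1 this).resolve_left hcc)
        exact_mod_cast this
      · intro b hb hbne
        rcases hsupp hb with hbq | ⟨δ', hδ', rfl⟩
        · obtain ⟨β, hβ, rfl⟩ := hbq
          simp only
          rw [xgen_inr, smul_zero]
        · simp only
          have hdd : δ' ≠ δ := by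
            rintro rfl
            exact hbne rfl
          rw [hZ, zcoeff_ne D.eta D.kk D.a D.psi δ' δ (fun h => hdd h.symm), smul_zero]
      · intro hn
        exact absurd hg hn
    -- coefficients of X-generators vanish
    have hxc : ∀ g ∈ c.support, g ∈ QSet → c g = 0 := by
      rintro g hg ⟨β, hβ, rfl⟩
      have h0 := key (Sum.inl β)
      rw [Finset.sum_eq_single ((xgen β, hF β) : Fsp × H)] at h0
      · simp only [xgen, Finsupp.single_apply, if_pos rfl] at h0
        simpa [xgen] using h0
      · intro b hb hbne
        rcases hsupp hb with ⟨β', hβ', rfl⟩ | hbz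
        · simp only
          have : β' ≠ β := by
            rintro rfl
            exact hbne rfl
          rw [xgen, Finsupp.single_apply, if_neg (by simpa using this), smul_zero]
        · rw [hzc b hb hbz, zero_smul]
      · intro hn
        exact absurd hg hn
    have hcall : ∀ g ∈ c.support, c g = 0 := by
      intro g hg
      rcases hsupp hg with h | h
      · exact hxc g hg h
      · exact hzc g hg h
    have : x = 0 := by
      rw [hxs]
      apply Finset.sum_eq_zero
      intro g hg
      rw [hcall g hg, zero_smul]
    rw [this]
    rfl
  -- surjectivity onto G
  have hGsurj : ∀ f ∈ Ggrp S D, ∃ y : H, (f, y) ∈ T := by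
    intro f hf
    refine AddSubgroup.closure_induction ?_ ?_ ?_ ?_ hf
    · rintro q (⟨β, hβ, rfl⟩ | ⟨δ, hδ, n, rfl⟩)
      · exact ⟨hF β, AddSubgroup.subset_closure (Or.inl ⟨β, hβ, rfl⟩)⟩
      · exact ⟨u δ n, AddSubgroup.subset_closure (Or.inr ⟨δ, hδ, n, rfl⟩)⟩
    · exact ⟨0, T.zero_mem⟩
    · rintro f₁ f₂ _ _ ⟨y₁, hy₁⟩ ⟨y₂, hy₂⟩
      exact ⟨y₁ + y₂, T.add_mem hy₁ hy₂⟩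
    · rintro f₁ _ ⟨y₁, hy₁⟩
      exact ⟨-y₁, by simpa using T.neg_mem hy₁⟩
  -- compatibility with p
  have hcompat : ∀ x ∈ T, ∃ hx1 : x.1 ∈ Ggrp S D, p x.2 = ⟨x.1, hx1⟩ := by
    intro x hx
    refine AddSubgroup.closure_induction ?_ ?_ ?_ ?_ hx
    · rintro q (⟨β, hβ, rfl⟩ | ⟨δ, hδ, n, rfl⟩)
      · refine ⟨AddSubgroup.subset_closure (Or.inl ⟨β, hβ, rfl⟩), ?_⟩
        exact Subtype.ext (hpF β hβ)
      · refine ⟨AddSubgroup.subset_closure (Or.inr ⟨δ, hδ, n, rfl⟩), ?_⟩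
        exact Subtype.ext (hpu δ hδ n)
    · exact ⟨(Ggrp S D).zero_mem, by simp only [Prod.snd_zero, map_zero]; rfl⟩
    · rintro x₁ x₂ _ _ ⟨h₁, hp₁⟩ ⟨h₂, hp₂⟩
      refine ⟨(Ggrp S D).add_mem h₁ h₂, ?_⟩
      have : p (x₁ + x₂).2 = p x₁.2 + p x₂.2 := by
        rw [Prod.snd_add, map_add]
      rw [this, hp₁, hp₂]
      rfl
    · rintro x₁ _ ⟨h₁, hp₁⟩
      refine ⟨(Ggrp S D).neg_mem h₁, ?_⟩
      have : p (-x₁).2 = -(p x₁.2) := by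
        rw [Prod.snd_neg, map_neg]
      rw [this, hp₁]
      rfl
  -- uniqueness of second coordinates
  have hUniq : ∀ (f : Fsp) (y y' : H), (f, y) ∈ T → (f, y') ∈ T → y = y' := by
    intro f y y' hy hy'
    have hmem : ((f, y) - (f, y') : Fsp × H) ∈ T := T.sub_mem hy hy'
    have h1 : ((f, y) - (f, y') : Fsp × H) = (0, y - y') := by
      simp
    rw [h1] at hmem
    obtain ⟨ν, hν⟩ := hTsub _ hmem
    have := hGraph (0, y - y') ⟨ν, hν⟩ rfl
    simp only at this
    exact sub_eq_zero.1 this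

  -- construct the section
  have hsec : ∀ g : ↥(Ggrp S D), ∃ y : H, ((g : Fsp), y) ∈ T := fun g => hGsurj g.1 g.2
  set sf : ↥(Ggrp S D) → H := fun g => Classical.choose (hsec g) with hsf
  have hsfT : ∀ g : ↥(Ggrp S D), ((g : Fsp), sf g) ∈ T := fun g => Classical.choose_spec (hsec g)
  have hadd : ∀ g₁ g₂ : ↥(Ggrp S D), sf (g₁ + g₂) = sf g₁ + sf g₂ := by
    intro g₁ g₂
    have h1 : (((g₁ + g₂ : ↥(Ggrp S D)) : Fsp), sf g₁ + sf g₂) ∈ T := by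
      have := T.add_mem (hsfT g₁) (hsfT g₂)
      simpa using this
    exact hUniq _ _ _ (hsfT (g₁ + g₂)) h1
  have hzero : sf 0 = 0 := by
    have h1 : (((0 : ↥(Ggrp S D)) : Fsp), (0 : H)) ∈ T := by
      exact T.zero_mem
    exact hUniq _ _ _ (hsfT 0) h1
  refine ⟨{ toFun := sf, map_zero' := hzero, map_add' := hadd }, ?_⟩
  intro g
  obtain ⟨h1, h2⟩ := hcompat _ (hsfT g)
  simp only [AddMonoidHom.coe_mk, ZeroHom.coe_mk]
  rw [h2]

end Master

theorem statement13 (S : Set Ordinal) (hS : GoodS S) (D : GroupData S)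
    (hpsi : D.psi = Nat.factorial)
    (hunif : HasUniformization S D.eta ℕ)
    (H : Type 1) [AddCommGroup H] (p : H →+ ↥(Ggrp S D))
    (hsurj : Function.Surjective p) (hker : Countable ↥p.ker) :
    ∃ s : ↥(Ggrp S D) →+ H, ∀ g : ↥(Ggrp S D), p (s g) = g := by
  classical
  set Z : Ordinal → ℕ → Fsp := zgen D.eta D.kk D.a D.psi with hZdef
  have hxmem : ∀ β, β < ω₁ → xgen β ∈ Ggrp S D :=
    fun β hβ => AddSubgroup.subset_closure (Or.inl ⟨β, hβ, rfl⟩)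
  have hzmem : ∀ δ ∈ S, ∀ n : ℕ, Z δ n ∈ Ggrp S D :=
    fun δ hδ n => AddSubgroup.subset_closure (Or.inr ⟨δ, hδ, n, rfl⟩)
  have heta_lt : ∀ δ ∈ S, ∀ m : ℕ, D.eta δ m < ω₁ := by
    intro δ hδ m
    exact lt_trans ((D.ladder δ hδ).lt_delta m) (hS.lt_omega1 δ hδ)
  -- basic lifts
  set h0 : Ordinal → H :=
    fun β => if hβ : xgen β ∈ Ggrp S D then Classical.choose (hsurj ⟨_, hβ⟩) else 0 with hh0
  have hph0 : ∀ β (hβ : xgen β ∈ Ggrp S D), p (h0 β) = ⟨xgen β, hβ⟩ := by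
    intro β hβ
    rw [hh0]
    simp only [dif_pos hβ]
    exact Classical.choose_spec (hsurj ⟨_, hβ⟩)
  set v : Ordinal → ℕ → H :=
    fun δ n => if hδ : Z δ n ∈ Ggrp S D then Classical.choose (hsurj ⟨_, hδ⟩) else 0 with hv
  have hpv : ∀ δ n (hδ : Z δ n ∈ Ggrp S D), p (v δ n) = ⟨Z δ n, hδ⟩ := by
    intro δ n hδ
    rw [hv]
    simp only [dif_pos hδ]
    exact Classical.choose_spec (hsurj ⟨_, hδ⟩)
  set w : Ordinal → ℕ → H :=
    fun δ n => ∑ l ∈ Finset.range (D.kk δ (n+1) - D.kk δ n),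
      D.a δ n l • h0 (D.eta δ (D.kk δ n + l)) with hw
  set e : Ordinal → ℕ → H := fun δ n => (D.psi n : ℤ) • v δ (n+1) - w δ n - v δ n with he
  have hpw : ∀ δ ∈ S, ∀ n : ℕ, ((p (w δ n) : ↥(Ggrp S D)) : Fsp)
      = ∑ l ∈ Finset.range (D.kk δ (n+1) - D.kk δ n),
          D.a δ n l • xgen (D.eta δ (D.kk δ n + l)) := by
    intro δ hδ n
    rw [hw]
    rw [map_sum]
    push_cast
    apply Finset.sum_congr rfl
    intro l _
    rw [map_zsmul, hph0 _ (hxmem _ (heta_lt δ hδ _))]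
    rfl
  have heK : ∀ δ ∈ S, ∀ n : ℕ, e δ n ∈ p.ker := by
    intro δ hδ n
    rw [AddMonoidHom.mem_ker]
    apply Subtype.ext
    have h1 : ((p (e δ n) : ↥(Ggrp S D)) : Fsp)
        = (D.psi n : ℤ) • ((p (v δ (n+1)) : ↥(Ggrp S D)) : Fsp)
          - ((p (w δ n) : ↥(Ggrp S D)) : Fsp) - ((p (v δ n) : ↥(Ggrp S D)) : Fsp) := by
      rw [he]
      simp only [map_sub, map_zsmul, AddSubgroup.coe_sub]
      norm_cast
    rw [h1, hpw δ hδ n, hpv δ (n+1) (hzmem δ hδ (n+1)), hpv δ n (hzmem δ hδ n)]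
    show (D.psi n : ℤ) • Z δ (n+1) - _ - Z δ n = ((0 : ↥(Ggrp S D)) : Fsp)
    rw [hZdef, z_rel D.eta D.kk D.a D.psi D.psi_ne δ n]
    simp
  -- kernel encoding
  have hne : Nonempty ↥p.ker := ⟨0⟩
  obtain ⟨fenc, hfenc⟩ := Countable.exists_injective_nat ↥p.ker
  set dec : ℕ → ↥p.ker := Function.invFun fenc with hdecdef
  have hdec : ∀ x : ↥p.ker, dec (fenc x) = x := Function.leftInverse_invFun hfenc
  -- Bezout coefficients
  have hbez0 : ∀ δ (n : ℕ), ∃ b : ℕ → ℤ, δ ∈ S →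
      ∑ l ∈ Finset.range (D.kk δ (n+1) - D.kk δ n), D.a δ n l * b l = 1 := by
    intro δ n
    by_cases hδ : δ ∈ S
    · obtain ⟨b, hb⟩ := finset_gcd_bezout (Finset.range (D.kk δ (n+1) - D.kk δ n)) (D.a δ n)
      exact ⟨b, fun _ => by rw [hb, D.a_gcd δ hδ n]⟩
    · exact ⟨0, fun h => absurd h hδ⟩
  choose bb hbb using hbez0
  -- block index
  set blk : Ordinal → ℕ → ℕ := fun δ m => Nat.findGreatest (fun n => D.kk δ n ≤ m) m with hblkdef
  have hblk : ∀ δ ∈ S, ∀ n l : ℕ, l < D.kk δ (n+1) - D.kk δ n → blk δ (D.kk δ n + l) = n := by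
    intro δ hδ n l hl
    have hmono := D.kk_mono δ hδ
    have h1 : n ≤ D.kk δ n + l := le_trans hmono.le_apply (Nat.le_add_right _ _)
    have h2 : D.kk δ n ≤ D.kk δ n + l := Nat.le_add_right _ _
    apply le_antisymm
    · by_contra hgt
      push_neg at hgt
      have hspec : D.kk δ (blk δ (D.kk δ n + l)) ≤ D.kk δ n + l :=
        Nat.findGreatest_spec (P := fun j => D.kk δ j ≤ D.kk δ n + l) h1 h2
      have h3 : D.kk δ (n+1) ≤ D.kk δ (blk δ (D.kk δ n + l)) := hmono.monotone hgt
      have h4 : D.kk δ n < D.kk δ (n+1) := hmono (Nat.lt_succ_self n)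
      omega
    · exact Nat.le_findGreatest (P := fun j => D.kk δ j ≤ D.kk δ n + l) h1 h2
  -- error terms as kernel elements and the coloring
  set eK : Ordinal → ℕ → ↥p.ker :=
    fun δ n => if h : δ ∈ S then ⟨e δ n, heK δ h n⟩ else 0 with heKdef
  set col : Ordinal → ℕ → ℕ :=
    fun δ m => fenc ((bb δ (blk δ m) (m - D.kk δ (blk δ m))) • eK δ (blk δ m)) with hcol
  obtain ⟨Ψ', Ψs, hΨ⟩ := hunif col
  set Ψ : Ordinal → H := fun β => ((dec (Ψ' β) : ↥p.ker) : H) with hΨdef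
  have hΨK : ∀ β, Ψ β ∈ p.ker := fun β => (dec (Ψ' β)).2
  have hΨval : ∀ δ ∈ S, ∀ n : ℕ, Ψs δ ≤ n → ∀ l : ℕ, l < D.kk δ (n+1) - D.kk δ n →
      Ψ (D.eta δ (D.kk δ n + l)) = bb δ n l • e δ n := by
    intro δ hδ n hn l hl
    have hm : Ψs δ ≤ D.kk δ n + l :=
      le_trans hn (le_trans (D.kk_mono δ hδ).le_apply (Nat.le_add_right _ _))
    have h1 := hΨ δ hδ (D.kk δ n + l) hm
    rw [hΨdef]
    simp only
    rw [h1, hcol]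
    simp only
    rw [hblk δ hδ n l hl, Nat.add_sub_cancel_left, hdec, heKdef]
    simp only [dif_pos hδ]
    rfl
  set A : Ordinal → ℕ → H :=
    fun δ n => ∑ l ∈ Finset.range (D.kk δ (n+1) - D.kk δ n),
      D.a δ n l • Ψ (D.eta δ (D.kk δ n + l)) with hA
  have hAe : ∀ δ ∈ S, ∀ n : ℕ, Ψs δ ≤ n → A δ n = e δ n := by
    intro δ hδ n hn
    rw [hA]
    simp only
    have h1 : ∀ l ∈ Finset.range (D.kk δ (n+1) - D.kk δ n),
        D.a δ n l • Ψ (D.eta δ (D.kk δ n + l)) = (D.a δ n l * bb δ n l) • e δ n := by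
      intro l hl
      rw [hΨval δ hδ n hn l (Finset.mem_range.1 hl), smul_smul]
    rw [Finset.sum_congr rfl h1, ← Finset.sum_smul, hbb δ n hδ, one_smul]
  have hAK : ∀ δ (n : ℕ), A δ n ∈ p.ker := by
    intro δ n
    rw [hA]
    apply AddSubgroup.sum_mem
    intro l _
    exact AddSubgroup.zsmul_mem _ (hΨK _) _
  -- the correction terms d
  set drec : Ordinal → ℕ → ℕ → H :=
    fun δ m => Nat.rec (motive := fun _ => ℕ → H) (fun _ => 0)
      (fun _ ih n => e δ n + (D.psi n : ℤ) • ih (n+1) - A δ n) m with hdrec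
  set d : Ordinal → ℕ → H := fun δ n => drec δ (Ψs δ - n) n with hd
  have hd0 : ∀ δ (n : ℕ), Ψs δ ≤ n → d δ n = 0 := by
    intro δ n hn
    rw [hd]
    simp only
    rw [Nat.sub_eq_zero_of_le hn]
    rfl
  have hdrecstep : ∀ δ (n : ℕ), n < Ψs δ →
      d δ n = e δ n + (D.psi n : ℤ) • d δ (n+1) - A δ n := by
    intro δ n hn
    have h1 : Ψs δ - n = (Ψs δ - (n+1)) + 1 := by omega
    rw [hd]
    simp only
    rw [h1]
  have hdK : ∀ δ ∈ S, ∀ n : ℕ, d δ n ∈ p.ker := by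
    intro δ hδ n
    rw [hd]
    simp only
    generalize Ψs δ - n = m
    induction m generalizing n with
    | zero => exact AddSubgroup.zero_mem _
    | succ m ih =>
      show e δ n + (D.psi n : ℤ) • drec δ m (n+1) - A δ n ∈ p.ker
      exact AddSubgroup.sub_mem _
        (AddSubgroup.add_mem _ (heK δ hδ n) (AddSubgroup.zsmul_mem _ (ih (n+1)) _))
        (hAK δ n)
  -- final lifts
  set hF : Ordinal → H := fun β => h0 β + Ψ β with hhF
  set u : Ordinal → ℕ → H := fun δ n => v δ n + d δ n with hu
  apply exists_section S hS D H p hF u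
  · intro β hβ
    rw [hhF]
    simp only
    rw [map_add, AddMonoidHom.mem_ker.1 (hΨK β), add_zero, hph0 β (hxmem β hβ)]
  · intro δ hδ n
    rw [hu]
    simp only
    rw [map_add, AddMonoidHom.mem_ker.1 (hdK δ hδ n), add_zero, hpv δ n (hzmem δ hδ n)]
  · intro δ hδ n
    -- the main relation
    have hsplit : ∑ l ∈ Finset.range (D.kk δ (n+1) - D.kk δ n),
        D.a δ n l • hF (D.eta δ (D.kk δ n + l)) = w δ n + A δ n := by
      rw [hhF, hw, hA]
      simp only
      rw [← Finset.sum_add_distrib]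
      apply Finset.sum_congr rfl
      intro l _
      rw [smul_add]
    rw [hsplit, hu]
    simp only
    have hE : (D.psi n : ℤ) • v δ (n+1) = e δ n + w δ n + v δ n := by
      rw [he]
      simp only
      abel
    rw [smul_add, hE]
    by_cases hcase : Ψs δ ≤ n
    · rw [hd0 δ n hcase, hd0 δ (n+1) (le_trans hcase (Nat.le_succ n)),
        hAe δ hδ n hcase]
      simp only [smul_zero, add_zero]
      abel
    · push_neg at hcase
      rw [hdrecstep δ n hcase]
      abel

end
end

section
/- Let c¹, c² : ℕ → {0,1} and let u, v : ℕ → ℤ be sequences of integers satisfying n!·u(n+1) = u(n) − c¹(n) and n!·v(n+1) = v(n) − c²(n) for all n ∈ ℕ. If u(0) = v(0) and c¹(n) = c²(n) for n ∈ {0,1}, then c¹ = c². (This is the arithmetic core of the non-splitting argument: the first index n ≥ 2 at which c¹ and c² could differ would force n! to divide c²(n) − c¹(n) = ±1, a contradiction.) -/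
set_option autoImplicit false
noncomputable section

theorem statement19 (c₁ c₂ : ℕ → Fin 2) (u v : ℕ → ℤ)
    (hu : ∀ n : ℕ, (Nat.factorial n : ℤ) * u (n + 1) = u n - ((c₁ n : ℕ) : ℤ))
    (hv : ∀ n : ℕ, (Nat.factorial n : ℤ) * v (n + 1) = v n - ((c₂ n : ℕ) : ℤ))
    (h0 : u 0 = v 0) (hc : ∀ n < 2, c₁ n = c₂ n) :
    c₁ = c₂ := by
  have key : ∀ n, u n = v n ∧ c₁ n = c₂ n := by
    intro n
    induction n using Nat.strong_induction_on with
    | _ n ih =>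
      have huv : u n = v n := by
        match n with
        | 0 => exact h0
        | m + 1 =>
          have h1 := hu m
          have h2 := hv m
          have hum : u m = v m := (ih m (Nat.lt_succ_self m)).1
          have hcm : c₁ m = c₂ m := (ih m (Nat.lt_succ_self m)).2
          have hfac : ((Nat.factorial m : ℤ)) ≠ 0 := by
            exact_mod_cast Nat.factorial_ne_zero m
          have : (Nat.factorial m : ℤ) * u (m+1) = (Nat.factorial m : ℤ) * v (m+1) := by
            rw [h1, h2, hum, hcm]
          exact mul_left_cancel₀ hfac this
      refine ⟨huv, ?_⟩
      by_cases hn : n < 2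
      · exact hc n hn
      · -- n ≥ 2, so n! ≥ 2 divides c₂ n - c₁ n, with |c₂ n - c₁ n| ≤ 1
        have h1 := hu n
        have h2 := hv n
        have hd : (Nat.factorial n : ℤ) ∣ ((c₂ n : ℕ) : ℤ) - ((c₁ n : ℕ) : ℤ) := by
          refine ⟨u (n+1) - v (n+1), ?_⟩
          rw [mul_sub, h1, h2, huv]; ring
        have hfac : 2 ≤ Nat.factorial n := by
          calc 2 = Nat.factorial 2 := rfl
          _ ≤ Nat.factorial n := Nat.factorial_le (le_of_not_gt hn)
        have hb1 : ((c₁ n : ℕ) : ℤ) < 2 := by exact_mod_cast (c₁ n).2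
        have hb2 : ((c₂ n : ℕ) : ℤ) < 2 := by exact_mod_cast (c₂ n).2
        have hz : ((c₂ n : ℕ) : ℤ) - ((c₁ n : ℕ) : ℤ) = 0 := by
          by_contra hne
          have habs := Int.le_of_dvd (abs_pos.mpr hne) ((dvd_abs _ _).mpr hd)
          have : |((c₂ n : ℕ) : ℤ) - ((c₁ n : ℕ) : ℤ)| ≤ 1 := by
            rw [abs_sub_le_iff]
            constructor <;> omega
          have h2' : (2 : ℤ) ≤ (Nat.factorial n : ℤ) := by exact_mod_cast hfac
          omega
        have : ((c₁ n : ℕ) : ℤ) = ((c₂ n : ℕ) : ℤ) := by omega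
        have : (c₁ n : ℕ) = (c₂ n : ℕ) := by exact_mod_cast this
        exact Fin.ext this
  funext n
  exact (key n).2

end
end
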